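/- Let F(x,y) = N(x,y)/D(x,y) be the rational function with N(x,y) = −yx + (y+210y²+4300y³+34000y⁴+120000y⁵+160000y⁶)x² + (y+180y²+3575y³+27500y⁴+94000y⁵+120000y⁶)x³ + (50y²+1000y³+7450y⁴+24500y⁵+30000y⁶)x⁴ + (5y²+95y³+675y⁴+2125y⁵+2500y⁶)x⁵ and D(x,y) = 1 − (205y+4300y²+34000y³+120000y⁴+160000y⁵)x − (215y+4475y²+35000y³+122000y⁴+160000y⁵)x² − (85y+1750y²+13525y³+46500y⁴+60000y⁵)x³ − (15y+305y²+2325y³+7875y⁴+10000y⁵)x⁴ − (y+20y²+150y³+500y⁴+625y⁵)x⁵, viewed as a formal power series in x and y over ℚ. Then every coefficient α_{i,j} of x^i y^j in F is an integer, and α_{1,1} = −1 while α_{1,j} = 0 for all j ≥ 2. -/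

import Mathlib

open MvPowerSeries

lemma aux_coeff_X_mul {R : Type*} [CommRing R] (s : Fin 2) (m : Fin 2 →₀ ℕ)
    (A : MvPowerSeries (Fin 2) R) (h : m s = 0) :
    MvPowerSeries.coeff m (MvPowerSeries.X s * A) = 0 := by
  classical
  rw [MvPowerSeries.X, MvPowerSeries.coeff_monomial_mul, if_neg]
  intro hle
  have h1 := Finsupp.le_def.mp hle s
  rw [Finsupp.single_eq_same, h] at h1
  omega

lemma aux_coeff_X_mul' {R : Type*} [CommRing R] (s : Fin 2) (m : Fin 2 →₀ ℕ)
    (A : MvPowerSeries (Fin 2) R) :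
    MvPowerSeries.coeff (Finsupp.single s 1 + m) (MvPowerSeries.X s * A) =
      MvPowerSeries.coeff m A := by
  classical
  rw [MvPowerSeries.X, MvPowerSeries.coeff_add_monomial_mul, one_mul]

noncomputable def Dz : MvPowerSeries (Fin 2) ℤ :=
  1 - (205 * X 1 + 4300 * X 1 ^ 2 + 34000 * X 1 ^ 3 + 120000 * X 1 ^ 4 +
          160000 * X 1 ^ 5) * X 0
    - (215 * X 1 + 4475 * X 1 ^ 2 + 35000 * X 1 ^ 3 + 122000 * X 1 ^ 4 +
          160000 * X 1 ^ 5) * X 0 ^ 2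
    - (85 * X 1 + 1750 * X 1 ^ 2 + 13525 * X 1 ^ 3 + 46500 * X 1 ^ 4 +
          60000 * X 1 ^ 5) * X 0 ^ 3
    - (15 * X 1 + 305 * X 1 ^ 2 + 2325 * X 1 ^ 3 + 7875 * X 1 ^ 4 +
          10000 * X 1 ^ 5) * X 0 ^ 4
    - (X 1 + 20 * X 1 ^ 2 + 150 * X 1 ^ 3 + 500 * X 1 ^ 4 + 625 * X 1 ^ 5) * X 0 ^ 5

noncomputable def Nz : MvPowerSeries (Fin 2) ℤ :=
  - X 1 * X 0
    + (X 1 + 210 * X 1 ^ 2 + 4300 * X 1 ^ 3 + 34000 * X 1 ^ 4 + 120000 * X 1 ^ 5 +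
        160000 * X 1 ^ 6) * X 0 ^ 2
    + (X 1 + 180 * X 1 ^ 2 + 3575 * X 1 ^ 3 + 27500 * X 1 ^ 4 + 94000 * X 1 ^ 5 +
        120000 * X 1 ^ 6) * X 0 ^ 3
    + (50 * X 1 ^ 2 + 1000 * X 1 ^ 3 + 7450 * X 1 ^ 4 + 24500 * X 1 ^ 5 +
        30000 * X 1 ^ 6) * X 0 ^ 4
    + (5 * X 1 ^ 2 + 95 * X 1 ^ 3 + 675 * X 1 ^ 4 + 2125 * X 1 ^ 5 +
        2500 * X 1 ^ 6) * X 0 ^ 5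

noncomputable def Fz : MvPowerSeries (Fin 2) ℤ := Nz * MvPowerSeries.invOfUnit Dz 1

lemma constantCoeff_Dz : MvPowerSeries.constantCoeff Dz = 1 := by
  simp [Dz, map_sub, map_mul, map_add, map_pow, map_one, map_ofNat,
    MvPowerSeries.constantCoeff_X]

lemma Fz_mul_Dz : Fz * Dz = Nz := by
  rw [Fz, mul_assoc, MvPowerSeries.invOfUnit_mul Dz 1 (by rw [constantCoeff_Dz]; rfl),
    mul_one]

set_option maxHeartbeats 2000000 in

theorem alpha_matrix_first_row
    (F : MvPowerSeries (Fin 2) ℚ)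
    (hF : F *
      (1 - (205 * X 1 + 4300 * X 1 ^ 2 + 34000 * X 1 ^ 3 + 120000 * X 1 ^ 4 +
              160000 * X 1 ^ 5) * X 0
         - (215 * X 1 + 4475 * X 1 ^ 2 + 35000 * X 1 ^ 3 + 122000 * X 1 ^ 4 +
              160000 * X 1 ^ 5) * X 0 ^ 2
         - (85 * X 1 + 1750 * X 1 ^ 2 + 13525 * X 1 ^ 3 + 46500 * X 1 ^ 4 +
              60000 * X 1 ^ 5) * X 0 ^ 3
         - (15 * X 1 + 305 * X 1 ^ 2 + 2325 * X 1 ^ 3 + 7875 * X 1 ^ 4 +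
              10000 * X 1 ^ 5) * X 0 ^ 4
         - (X 1 + 20 * X 1 ^ 2 + 150 * X 1 ^ 3 + 500 * X 1 ^ 4 + 625 * X 1 ^ 5) * X 0 ^ 5) =
      - X 1 * X 0
        + (X 1 + 210 * X 1 ^ 2 + 4300 * X 1 ^ 3 + 34000 * X 1 ^ 4 + 120000 * X 1 ^ 5 +
            160000 * X 1 ^ 6) * X 0 ^ 2
        + (X 1 + 180 * X 1 ^ 2 + 3575 * X 1 ^ 3 + 27500 * X 1 ^ 4 + 94000 * X 1 ^ 5 +
            120000 * X 1 ^ 6) * X 0 ^ 3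
        + (50 * X 1 ^ 2 + 1000 * X 1 ^ 3 + 7450 * X 1 ^ 4 + 24500 * X 1 ^ 5 +
            30000 * X 1 ^ 6) * X 0 ^ 4
        + (5 * X 1 ^ 2 + 95 * X 1 ^ 3 + 675 * X 1 ^ 4 + 2125 * X 1 ^ 5 +
            2500 * X 1 ^ 6) * X 0 ^ 5) :
    (∀ i j : ℕ, ∃ z : ℤ,
      MvPowerSeries.coeff (Finsupp.single 0 i + Finsupp.single 1 j) F = (z : ℚ)) ∧
    MvPowerSeries.coeff (Finsupp.single 0 1 + Finsupp.single 1 1) F = -1 ∧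
    (∀ j : ℕ, 2 ≤ j →
      MvPowerSeries.coeff (Finsupp.single 0 1 + Finsupp.single 1 j) F = 0) := by
  classical
  -- restructured equation
  have hF' : F - X 0 *
      (((205 * X 1 + 4300 * X 1 ^ 2 + 34000 * X 1 ^ 3 + 120000 * X 1 ^ 4 +
              160000 * X 1 ^ 5)
         + (215 * X 1 + 4475 * X 1 ^ 2 + 35000 * X 1 ^ 3 + 122000 * X 1 ^ 4 +
              160000 * X 1 ^ 5) * X 0
         + (85 * X 1 + 1750 * X 1 ^ 2 + 13525 * X 1 ^ 3 + 46500 * X 1 ^ 4 +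
              60000 * X 1 ^ 5) * X 0 ^ 2
         + (15 * X 1 + 305 * X 1 ^ 2 + 2325 * X 1 ^ 3 + 7875 * X 1 ^ 4 +
              10000 * X 1 ^ 5) * X 0 ^ 3
         + (X 1 + 20 * X 1 ^ 2 + 150 * X 1 ^ 3 + 500 * X 1 ^ 4 + 625 * X 1 ^ 5) * X 0 ^ 4) * F)
      = X 0 * (-(X 1) + X 0 *
        ((X 1 + 210 * X 1 ^ 2 + 4300 * X 1 ^ 3 + 34000 * X 1 ^ 4 + 120000 * X 1 ^ 5 +
            160000 * X 1 ^ 6)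
        + (X 1 + 180 * X 1 ^ 2 + 3575 * X 1 ^ 3 + 27500 * X 1 ^ 4 + 94000 * X 1 ^ 5 +
            120000 * X 1 ^ 6) * X 0
        + (50 * X 1 ^ 2 + 1000 * X 1 ^ 3 + 7450 * X 1 ^ 4 + 24500 * X 1 ^ 5 +
            30000 * X 1 ^ 6) * X 0 ^ 2
        + (5 * X 1 ^ 2 + 95 * X 1 ^ 3 + 675 * X 1 ^ 4 + 2125 * X 1 ^ 5 +
            2500 * X 1 ^ 6) * X 0 ^ 3)) := by
    linear_combination hF
  have hzero : ∀ m : Fin 2 →₀ ℕ, m 0 = 0 → MvPowerSeries.coeff m F = 0 := by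
    intro m hm
    have h := congrArg (MvPowerSeries.coeff m) hF'
    rwa [map_sub, aux_coeff_X_mul 0 m _ hm, aux_coeff_X_mul 0 m _ hm, sub_zero] at h
  have hzero' : ∀ (G : MvPowerSeries (Fin 2) ℚ) (m : Fin 2 →₀ ℕ), m 0 = 0 →
      MvPowerSeries.coeff m (G * F) = 0 := by
    intro G m hm
    rw [MvPowerSeries.coeff_mul]
    apply Finset.sum_eq_zero
    rintro ⟨p, q⟩ hpq
    rw [Finset.HasAntidiagonal.mem_antidiagonal] at hpq
    have hq : q 0 = 0 := by
      have h0 := congrArg (fun f : Fin 2 →₀ ℕ => f 0) hpq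
      simp only [Finsupp.add_apply] at h0
      omega
    rw [hzero q hq, mul_zero]
  have hone : ((1 : Fin 2) : Fin 2) ≠ 0 := by decide
  have hsj : ∀ j : ℕ, (Finsupp.single (1 : Fin 2) j) 0 = 0 :=
    fun j => Finsupp.single_eq_of_ne hone.symm
  have keyrow : ∀ j : ℕ, MvPowerSeries.coeff (Finsupp.single 0 1 + Finsupp.single 1 j) F
      = if Finsupp.single (1 : Fin 2) j = Finsupp.single 1 1 then (-1 : ℚ) else 0 := by
    intro j
    have h := congrArg (MvPowerSeries.coeff (Finsupp.single 0 1 + Finsupp.single 1 j)) hF'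
    rw [map_sub, aux_coeff_X_mul' 0 (Finsupp.single 1 j), aux_coeff_X_mul' 0 (Finsupp.single 1 j),
      hzero' _ _ (hsj j), sub_zero, map_add, map_neg,
      aux_coeff_X_mul 0 _ _ (hsj j), add_zero, MvPowerSeries.coeff_X] at h
    rw [h]
    split <;> simp
  -- integrality
  have key : F = MvPowerSeries.map (Int.castRingHom ℚ) Fz := by
    have h1 : MvPowerSeries.map (Int.castRingHom ℚ) Fz *
        (1 - (205 * X 1 + 4300 * X 1 ^ 2 + 34000 * X 1 ^ 3 + 120000 * X 1 ^ 4 +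
              160000 * X 1 ^ 5) * X 0
         - (215 * X 1 + 4475 * X 1 ^ 2 + 35000 * X 1 ^ 3 + 122000 * X 1 ^ 4 +
              160000 * X 1 ^ 5) * X 0 ^ 2
         - (85 * X 1 + 1750 * X 1 ^ 2 + 13525 * X 1 ^ 3 + 46500 * X 1 ^ 4 +
              60000 * X 1 ^ 5) * X 0 ^ 3
         - (15 * X 1 + 305 * X 1 ^ 2 + 2325 * X 1 ^ 3 + 7875 * X 1 ^ 4 +
              10000 * X 1 ^ 5) * X 0 ^ 4
         - (X 1 + 20 * X 1 ^ 2 + 150 * X 1 ^ 3 + 500 * X 1 ^ 4 + 625 * X 1 ^ 5) * X 0 ^ 5) =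
        - X 1 * X 0
        + (X 1 + 210 * X 1 ^ 2 + 4300 * X 1 ^ 3 + 34000 * X 1 ^ 4 + 120000 * X 1 ^ 5 +
            160000 * X 1 ^ 6) * X 0 ^ 2
        + (X 1 + 180 * X 1 ^ 2 + 3575 * X 1 ^ 3 + 27500 * X 1 ^ 4 + 94000 * X 1 ^ 5 +
            120000 * X 1 ^ 6) * X 0 ^ 3
        + (50 * X 1 ^ 2 + 1000 * X 1 ^ 3 + 7450 * X 1 ^ 4 + 24500 * X 1 ^ 5 +
            30000 * X 1 ^ 6) * X 0 ^ 4
        + (5 * X 1 ^ 2 + 95 * X 1 ^ 3 + 675 * X 1 ^ 4 + 2125 * X 1 ^ 5 +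
            2500 * X 1 ^ 6) * X 0 ^ 5 := by
      have h2 := congrArg (MvPowerSeries.map (Int.castRingHom ℚ)) Fz_mul_Dz
      rw [map_mul] at h2
      simp only [Dz, Nz, map_mul, map_sub, map_add, map_neg, map_one, map_pow, map_ofNat,
        MvPowerSeries.map_X] at h2
      exact h2
    have hu : IsUnit (1 - (205 * X 1 + 4300 * X 1 ^ 2 + 34000 * X 1 ^ 3 + 120000 * X 1 ^ 4 +
              160000 * X 1 ^ 5) * X 0
         - (215 * X 1 + 4475 * X 1 ^ 2 + 35000 * X 1 ^ 3 + 122000 * X 1 ^ 4 +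
              160000 * X 1 ^ 5) * X 0 ^ 2
         - (85 * X 1 + 1750 * X 1 ^ 2 + 13525 * X 1 ^ 3 + 46500 * X 1 ^ 4 +
              60000 * X 1 ^ 5) * X 0 ^ 3
         - (15 * X 1 + 305 * X 1 ^ 2 + 2325 * X 1 ^ 3 + 7875 * X 1 ^ 4 +
              10000 * X 1 ^ 5) * X 0 ^ 4
         - (X 1 + 20 * X 1 ^ 2 + 150 * X 1 ^ 3 + 500 * X 1 ^ 4 + 625 * X 1 ^ 5) * X 0 ^ 5 :
          MvPowerSeries (Fin 2) ℚ) := by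
      rw [MvPowerSeries.isUnit_iff_constantCoeff]
      have : MvPowerSeries.constantCoeff (σ := Fin 2) (R := ℚ)
          (1 - (205 * X 1 + 4300 * X 1 ^ 2 + 34000 * X 1 ^ 3 + 120000 * X 1 ^ 4 +
              160000 * X 1 ^ 5) * X 0
         - (215 * X 1 + 4475 * X 1 ^ 2 + 35000 * X 1 ^ 3 + 122000 * X 1 ^ 4 +
              160000 * X 1 ^ 5) * X 0 ^ 2
         - (85 * X 1 + 1750 * X 1 ^ 2 + 13525 * X 1 ^ 3 + 46500 * X 1 ^ 4 +
              60000 * X 1 ^ 5) * X 0 ^ 3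
         - (15 * X 1 + 305 * X 1 ^ 2 + 2325 * X 1 ^ 3 + 7875 * X 1 ^ 4 +
              10000 * X 1 ^ 5) * X 0 ^ 4
         - (X 1 + 20 * X 1 ^ 2 + 150 * X 1 ^ 3 + 500 * X 1 ^ 4 + 625 * X 1 ^ 5) * X 0 ^ 5) = 1 := by
        simp [map_sub, map_mul, map_add, map_pow, map_one, map_ofNat,
          MvPowerSeries.constantCoeff_X]
      rw [this]
      exact isUnit_one
    refine hu.mul_left_cancel ?_
    rw [mul_comm _ F, mul_comm _ (MvPowerSeries.map (Int.castRingHom ℚ) Fz), hF, h1]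
  refine ⟨?_, ?_, ?_⟩
  · intro i j
    refine ⟨MvPowerSeries.coeff (Finsupp.single 0 i + Finsupp.single 1 j) Fz, ?_⟩
    rw [key, MvPowerSeries.coeff_map]
    rfl
  · rw [keyrow 1, if_pos rfl]
  · intro j hj
    rw [keyrow j, if_neg]
    intro h
    have := Finsupp.single_injective (1 : Fin 2) h
    omega
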